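/- For all matrices X, X' ∈ ℝ^{C×m}, every label y ∈ {1,…,C}, and every feature vector s ∈ ℝ^m with ‖s‖_2 ≤ 1: |f(X; (y,s)) − f(X'; (y,s))| ≤ 2 ‖X − X'‖_{2,∞}. In other words, each sample loss of multivariate logistic regression with unit-norm features is 2-Lipschitz with respect to the ‖·‖_{2,∞} norm. -/
import Mathlib

lemma cauchy_aux {m : ℕ} (f g : Fin m → ℝ) :
    |∑ j, f j * g j| ≤ Real.sqrt (∑ j, f j ^ 2) * Real.sqrt (∑ j, g j ^ 2) := by
  rw [abs_le]
  constructor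
  · have h := Real.sum_mul_le_sqrt_mul_sqrt Finset.univ (fun j => -(f j)) g
    have e1 : ∑ j, -(f j) * g j = -∑ j, f j * g j := by
      rw [← Finset.sum_neg_distrib]; exact Finset.sum_congr rfl fun j _ => neg_mul _ _
    have e2 : ∑ j, (-(f j)) ^ 2 = ∑ j, f j ^ 2 :=
      Finset.sum_congr rfl fun j _ => neg_sq _
    rw [e1, e2] at h
    linarith
  · exact Real.sum_mul_le_sqrt_mul_sqrt _ f g

theorem stmt17
    {C m : ℕ} (hC : 0 < C)
    (X X' : Fin C → Fin m → ℝ)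
    (y : Fin C) (s : Fin m → ℝ)
    (hs : Real.sqrt (∑ j, s j ^ 2) ≤ 1) :
    |Real.log (Real.exp (∑ j, X y j * s j) / ∑ c, Real.exp (∑ j, X c j * s j)) -
        Real.log (Real.exp (∑ j, X' y j * s j) / ∑ c, Real.exp (∑ j, X' c j * s j))| ≤
      2 * ⨆ c, Real.sqrt (∑ j, (X c j - X' c j) ^ 2) := by
  haveI : Nonempty (Fin C) := ⟨⟨0, hC⟩⟩
  set a : Fin C → ℝ := fun c => ∑ j, X c j * s j with ha
  set b : Fin C → ℝ := fun c => ∑ j, X' c j * s j with hb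
  set B : ℝ := ⨆ c, Real.sqrt (∑ j, (X c j - X' c j) ^ 2) with hBdef
  have hbd : BddAbove (Set.range fun c => Real.sqrt (∑ j, (X c j - X' c j) ^ 2)) :=
    (Set.finite_range _).bddAbove
  -- key pointwise bound
  have key : ∀ c, |a c - b c| ≤ B := by
    intro c
    have h1 : a c - b c = ∑ j, (X c j - X' c j) * s j := by
      simp [ha, hb, sub_mul, Finset.sum_sub_distrib]
    rw [h1]
    calc |∑ j, (X c j - X' c j) * s j|
        ≤ Real.sqrt (∑ j, (X c j - X' c j) ^ 2) * Real.sqrt (∑ j, s j ^ 2) :=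
          cauchy_aux _ _
      _ ≤ Real.sqrt (∑ j, (X c j - X' c j) ^ 2) * 1 := by
          exact mul_le_mul_of_nonneg_left hs (Real.sqrt_nonneg _)
      _ = Real.sqrt (∑ j, (X c j - X' c j) ^ 2) := mul_one _
      _ ≤ B := le_ciSup hbd c
  have hB0 : 0 ≤ B := le_trans (abs_nonneg _) (key ⟨0, hC⟩)
  have hSa : (0:ℝ) < ∑ c, Real.exp (a c) :=
    Finset.sum_pos (fun c _ => Real.exp_pos _) Finset.univ_nonempty
  have hSb : (0:ℝ) < ∑ c, Real.exp (b c) :=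
    Finset.sum_pos (fun c _ => Real.exp_pos _) Finset.univ_nonempty
  -- logsumexp Lipschitz
  have lse : ∀ (u v : Fin C → ℝ), (∀ c, u c - v c ≤ B) →
      Real.log (∑ c, Real.exp (u c)) - Real.log (∑ c, Real.exp (v c)) ≤ B := by
    intro u v huv
    have hSu : (0:ℝ) < ∑ c, Real.exp (u c) :=
      Finset.sum_pos (fun c _ => Real.exp_pos _) Finset.univ_nonempty
    have hSv : (0:ℝ) < ∑ c, Real.exp (v c) :=
      Finset.sum_pos (fun c _ => Real.exp_pos _) Finset.univ_nonempty
    have hsum : ∑ c, Real.exp (u c) ≤ Real.exp B * ∑ c, Real.exp (v c) := by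
      rw [Finset.mul_sum]
      refine Finset.sum_le_sum fun c _ => ?_
      rw [← Real.exp_add]
      exact Real.exp_le_exp.2 (by linarith [huv c])
    have h2 := Real.log_le_log hSu hsum
    rw [Real.log_mul (Real.exp_ne_zero _) (ne_of_gt hSv), Real.log_exp] at h2
    linarith
  have lse1 : Real.log (∑ c, Real.exp (a c)) - Real.log (∑ c, Real.exp (b c)) ≤ B :=
    lse a b fun c => (le_abs_self _).trans (key c)
  have lse2 : Real.log (∑ c, Real.exp (b c)) - Real.log (∑ c, Real.exp (a c)) ≤ B :=
    lse b a fun c => by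
      have := (neg_abs_le (a c - b c)).trans_eq (rfl)
      have h := key c
      have := neg_le_of_abs_le h
      linarith
  have hy := key y
  rw [Real.log_div (Real.exp_ne_zero _) (ne_of_gt hSa),
    Real.log_div (Real.exp_ne_zero _) (ne_of_gt hSb), Real.log_exp, Real.log_exp]
  rw [abs_le]
  constructor
  · have := neg_le_of_abs_le hy
    nlinarith [lse1, lse2]
  · have := le_of_abs_le hy
    nlinarith [lse1, lse2]
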